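/- The elimination-step invariant is preserved: if after i steps of elimination every remaining function has scope contained in {0..<n} minus the already-eliminated variables O({0..<i}), and the maximum over assignments to the remaining variables of the sum of remaining functions equals the original maximum, then the same invariant holds after step i+1. -/

import Mathlib

open BigOperators

variable {n : ℕ}

/-- One step of variable elimination: eliminate variable `l` by replacing all functions whose
scope contains `l` by a single new function maximizing their sum over `D l`. -/
noncomputable def elimStep (D : Fin n → Type*) [∀ i, Fintype (D i)] [∀ i, Nonempty (D i)]
    (l : Fin n) (fs : List ((((i : Fin n) → D i) → ℝ) × Finset (Fin n))) :
    List ((((i : Fin n) → D i) → ℝ) × Finset (Fin n)) :=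
  let E := fs.filter (fun f => l ∈ f.2)
  let E' := fs.filter (fun f => l ∉ f.2)
  ((fun x => ⨆ y : D l, ((E.map (fun f => f.1 (Function.update x l y))).sum)),
    (E.foldr (fun (f : (((i : Fin n) → D i) → ℝ) × Finset (Fin n)) s => f.2 ∪ s) ∅).erase l)
    :: E'

/-- The elimination invariant after `i` steps: every remaining function is properly scoped,
its scope avoids the already-eliminated variables `O '' {0..<i}`, and the maximum of the sum
of the remaining functions equals the original maximum. -/
def ElimInvar (D : Fin n → Type*) [∀ i, Fintype (D i)] [∀ i, Nonempty (D i)]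
    (O : Fin n → Fin n)
    (fs0 fs : List ((((i : Fin n) → D i) → ℝ) × Finset (Fin n))) (i : ℕ) : Prop :=
  (∀ f ∈ fs, ∀ x y : (j : Fin n) → D j, (∀ j ∈ f.2, x j = y j) → f.1 x = f.1 y) ∧
  (∀ f ∈ fs, ∀ j ∈ f.2, ∀ k : Fin n, (k : ℕ) < i → O k ≠ j) ∧
  ((⨆ x : (j : Fin n) → D j, ((fs.map (fun f => f.1 x)).sum)) =
    ⨆ x : (j : Fin n) → D j, ((fs0.map (fun f => f.1 x)).sum))

/-- Membership in the fold of unions. -/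
lemma mem_foldr_union {α β : Type*} [DecidableEq β] (E : List (α × Finset β)) (j : β) :
    j ∈ E.foldr (fun f s => f.2 ∪ s) ∅ ↔ ∃ f ∈ E, j ∈ f.2 := by
  induction E with
  | nil => simp
  | cons a E ih => simp [ih]

/-- Sup of a shifted finite family of reals. -/
lemma ciSup_add_const {ι : Type*} [Nonempty ι] [Finite ι] (a : ι → ℝ) (c : ℝ) :
    (⨆ y, a y) + c = ⨆ y, (a y + c) := by
  have hb : BddAbove (Set.range a) := (Set.finite_range a).bddAbove
  have hb' : BddAbove (Set.range fun y => a y + c) :=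
    (Set.finite_range _).bddAbove
  apply le_antisymm
  · rw [← le_sub_iff_add_le]
    exact ciSup_le fun y => le_sub_iff_add_le.2 (le_ciSup hb' y)
  · exact ciSup_le fun y => (add_le_add_iff_right c).2 (le_ciSup hb y)

/-- Splitting a sum over a list into the part satisfying `p` and the rest. -/
lemma sum_map_filter_add {α : Type*} (fs : List α) (p : α → Prop) [DecidablePred p]
    (φ : α → ℝ) :
    ((fs.filter (fun f => p f)).map φ).sum + ((fs.filter (fun f => ¬ p f)).map φ).sum
      = (fs.map φ).sum := by
  induction fs with
  | nil => simp
  | cons a fs ih =>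
    by_cases h : p a <;>
      simp [List.filter_cons, h, ← ih] <;> ring

/-- the elimination-step invariant is preserved: if it holds after `i` steps,
it holds after step `i + 1`. -/
theorem elim_invar_preserved (D : Fin n → Type*)
    [∀ i, Fintype (D i)] [∀ i, Nonempty (D i)]
    (O : Fin n → Fin n) (hO : Function.Bijective O)
    (fs0 fs : List ((((i : Fin n) → D i) → ℝ) × Finset (Fin n)))
    (i : ℕ) (hi : i < n)
    (hinv : ElimInvar D O fs0 fs i) :
    ElimInvar D O fs0 (elimStep D (O ⟨i, hi⟩) fs) (i + 1) := by
  obtain ⟨h1, h2, h3⟩ := hinv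
  set l : Fin n := O ⟨i, hi⟩ with hl
  set E := fs.filter (fun f => l ∈ f.2) with hE
  set E' := fs.filter (fun f => l ∉ f.2) with hE'
  have hEmem : ∀ f ∈ E, f ∈ fs ∧ l ∈ f.2 := by
    intro f hf
    have := List.mem_filter.1 hf
    simpa using this
  have hE'mem : ∀ f ∈ E', f ∈ fs ∧ l ∉ f.2 := by
    intro f hf
    have := List.mem_filter.1 hf
    simpa using this
  -- the new scope
  set S := (E.foldr (fun (f : (((i : Fin n) → D i) → ℝ) × Finset (Fin n)) s => f.2 ∪ s)
      ∅).erase l with hS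
  have hSmem : ∀ j, j ∈ S ↔ (j ≠ l ∧ ∃ f ∈ E, j ∈ f.2) := by
    intro j
    rw [hS, Finset.mem_erase, mem_foldr_union]
  have hstep : elimStep D l fs =
      ((fun x => ⨆ y : D l, ((E.map (fun f => f.1 (Function.update x l y))).sum)), S) :: E' := by
    rfl
  refine ⟨?_, ?_, ?_⟩
  · -- properly scoped
    rw [hstep]
    rintro f hf x y hxy
    rcases List.mem_cons.1 hf with rfl | hf
    · simp only
      congr 1
      funext a
      congr 1
      apply List.map_congr_left
      intro g hg
      apply h1 g (hEmem g hg).1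
      intro j hj
      by_cases hjl : j = l
      · subst hjl; simp
      · rw [Function.update_of_ne hjl, Function.update_of_ne hjl]
        exact hxy j ((hSmem j).2 ⟨hjl, g, hg, hj⟩)
    · exact h1 f (hE'mem f hf).1 x y hxy
  · -- scope avoids eliminated variables
    rw [hstep]
    rintro f hf j hj k hk
    rcases List.mem_cons.1 hf with rfl | hf
    · obtain ⟨hjl, g, hg, hjg⟩ := (hSmem j).1 hj
      rcases Nat.lt_succ_iff_lt_or_eq.1 hk with hk' | hk'
      · exact h2 g (hEmem g hg).1 j hjg k hk'
      · intro hOk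
        have hki : k = ⟨i, hi⟩ := Fin.ext hk'
        rw [hki, ← hl] at hOk
        exact hjl hOk.symm
    · obtain ⟨hffs, hlf⟩ := hE'mem f hf
      rcases Nat.lt_succ_iff_lt_or_eq.1 hk with hk' | hk'
      · exact h2 f hffs j hj k hk'
      · intro hOk
        have hki : k = ⟨i, hi⟩ := Fin.ext hk'
        rw [hki, ← hl] at hOk
        rw [← hOk] at hj
        exact hlf hj
  · -- sup equality
    rw [hstep, ← h3]
    have hbdd : ∀ F : ((j : Fin n) → D j) → ℝ, BddAbove (Set.range F) :=
      fun F => (Set.finite_range F).bddAbove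
    -- pointwise: sum over new list at x = ⨆ y, sum over fs at (update x l y)
    have key : ∀ x : (j : Fin n) → D j,
        ((((fun x => ⨆ y : D l, ((E.map (fun f => f.1 (Function.update x l y))).sum)), S)
          :: E').map (fun f => f.1 x)).sum
        = ⨆ y : D l, ((fs.map (fun f => f.1 (Function.update x l y))).sum) := by
      intro x
      rw [List.map_cons, List.sum_cons]
      have hE'const : ∀ y : D l,
          (E'.map (fun f => f.1 (Function.update x l y))).sum
            = (E'.map (fun f => f.1 x)).sum := by
        intro y
        apply congrArg
        apply List.map_congr_left
        intro g hg
        apply h1 g (hE'mem g hg).1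
        intro j hj
        have hjl : j ≠ l := fun h => (hE'mem g hg).2 (h ▸ hj)
        rw [Function.update_of_ne hjl]
      rw [ciSup_add_const]
      apply congrArg (fun f => iSup f)
      funext y
      rw [← hE'const y]
      exact sum_map_filter_add fs (fun f => l ∈ f.2)
        (fun f => f.1 (Function.update x l y))
    have keysup :
        (⨆ x : (j : Fin n) → D j,
          ⨆ y : D l, ((fs.map (fun f => f.1 (Function.update x l y))).sum))
        = ⨆ x : (j : Fin n) → D j, ((fs.map (fun f => f.1 x)).sum) := by
      set F : ((j : Fin n) → D j) → ℝ := fun x => ((fs.map (fun f => f.1 x)).sum) with hF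
      apply le_antisymm
      · apply ciSup_le
        intro x
        apply ciSup_le
        intro y
        exact le_ciSup (hbdd F) (Function.update x l y)
      · apply ciSup_le
        intro x
        calc F x = F (Function.update x l (x l)) := by rw [Function.update_eq_self]
          _ ≤ ⨆ y : D l, F (Function.update x l y) := by
              apply le_ciSup (f := fun y => F (Function.update x l y))
              exact (Set.finite_range _).bddAbove
          _ ≤ ⨆ x, ⨆ y : D l, F (Function.update x l y) := by
              apply le_ciSup (f := fun x => ⨆ y : D l, F (Function.update x l y))
              exact (Set.finite_range _).bddAbove
      -- done
    rw [← keysup]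
    apply congrArg (fun f => iSup f)
    funext x
    exact key x
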